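/- Let (W,S) be a Coxeter system and I_• = [I_0,…,I_d] a singlestep expression. The forward path subordinate to I_• (the path in which, at every step with I_k ⊃ I_{k+1}, one chooses p_{k+1} to be the coset contained in p_k with the same maximal element: max(p_{k+1}) = max(p_k)) terminates at the coset expressed by I_•, i.e., at the unique (I_0,I_d)-coset p with max(p) = w_{I_0} * w_{I_1} * ⋯ * w_{I_d}. -/

import Mathlib

namespace CoxeterPaper

open CoxeterSystem

variable {B : Type*} {W : Type*} [Group W] {M : CoxeterMatrix B}

/-- The Bruhat order on a Coxeter group: the reflexive-transitive closure of the
relation `a < a * t` for `t` a reflection with length increasing. -/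
def BruhatLE (cs : CoxeterSystem M W) (x y : W) : Prop :=
  Relation.ReflTransGen
    (fun a b => (∃ t, cs.IsReflection t ∧ b = a * t) ∧ cs.length a < cs.length b) x y

/-- One step of the Demazure product with a simple reflection. -/
noncomputable def demStep (cs : CoxeterSystem M W) (x : W) (i : B) : W :=
  if cs.length x < cs.length (x * cs.simple i) then x * cs.simple i else x

/-- The Demazure product of `x` with the word `l`. -/
noncomputable def demWord (cs : CoxeterSystem M W) (x : W) (l : List B) : W :=
  l.foldl (demStep cs) x

/-- The Demazure product (Coxeter monoid product) of two elements: fold the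
Demazure action of a reduced word of `y` onto `x`. -/
noncomputable def dem (cs : CoxeterSystem M W) (x y : W) : W :=
  demWord cs x (Classical.choose (cs.exists_reduced_word y))

/-- The standard parabolic subgroup attached to a set of simple indices. -/
def parabolic (cs : CoxeterSystem M W) (I : Set B) : Subgroup W :=
  Subgroup.closure (cs.simple '' I)

/-- `I` is finitary if the parabolic subgroup `W_I` is finite. -/
def Finitary (cs : CoxeterSystem M W) (I : Set B) : Prop :=
  (parabolic cs I : Set W).Finite

/-- The double coset `W_I w W_J` as a subset of `W`. -/
def doset (cs : CoxeterSystem M W) (I J : Set B) (w : W) : Set W :=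
  {x | ∃ a ∈ parabolic cs I, ∃ b ∈ parabolic cs J, x = a * w * b}

/-- `p` is an `(I,J)`-double coset. -/
def IsDCoset (cs : CoxeterSystem M W) (I J : Set B) (p : Set W) : Prop :=
  ∃ w, p = doset cs I J w

/-- `m` is the Bruhat-minimal element of `p`. -/
def IsMinOf (cs : CoxeterSystem M W) (p : Set W) (m : W) : Prop :=
  m ∈ p ∧ ∀ x ∈ p, BruhatLE cs m x

/-- `m` is the Bruhat-maximal element of `p`. -/
def IsMaxOf (cs : CoxeterSystem M W) (p : Set W) (m : W) : Prop :=
  m ∈ p ∧ ∀ x ∈ p, BruhatLE cs x m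

/-- `[I 0, …, I d]` is a singlestep expression. -/
def IsSinglestep (I : ℕ → Set B) (d : ℕ) : Prop :=
  ∀ k < d, (∃ s, s ∉ I k ∧ I (k + 1) = insert s (I k)) ∨
    (∃ s, s ∈ I k ∧ I (k + 1) = I k \ {s})

/-- `p` is a path subordinate to the singlestep expression `[I 0, …, I d]`. -/
def IsSubPath (cs : CoxeterSystem M W) (I : ℕ → Set B) (d : ℕ) (p : ℕ → Set W) : Prop :=
  p 0 = doset cs (I 0) (I 0) 1 ∧
  (∀ i ≤ d, IsDCoset cs (I 0) (I i) (p i)) ∧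
  ∀ k < d, (I k ⊆ I (k + 1) → p k ⊆ p (k + 1)) ∧ (I (k + 1) ⊆ I k → p (k + 1) ⊆ p k)

/-- The Demazure product `w_{I_0} * w_{I_1} * ⋯ * w_{I_d}` of the longest elements
`wI 0, …, wI d`. -/
noncomputable def exprMax (cs : CoxeterSystem M W) (wI : ℕ → W) (d : ℕ) : W :=
  ((List.range d).map fun k => wI (k + 1)).foldl (dem cs) (wI 0)

noncomputable section
open scoped Classical

variable (cs : CoxeterSystem M W)

/-- One step of the sign action. -/
def sigStep (i : B) : W × ℤˣ → W × ℤˣ :=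
  fun p => (cs.simple i * p.1 * cs.simple i, if p.1 = cs.simple i then -p.2 else p.2)

lemma sigStep_fix_iff (i : B) (t : W) :
    cs.simple i * t * cs.simple i = cs.simple i ↔ t = cs.simple i := by
  constructor
  · intro h
    have h2 : cs.simple i * (cs.simple i * t * cs.simple i) * cs.simple i
        = cs.simple i * cs.simple i * cs.simple i := by rw [h]
    simpa [mul_assoc, cs.simple_mul_simple_self, cs.simple_mul_simple_cancel_left] using h2
  · rintro rfl; simp [cs.simple_mul_simple_self]

lemma sigStep_invol (i : B) : Function.Involutive (sigStep cs i) := by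
  rintro ⟨t, e⟩
  unfold sigStep
  dsimp only
  by_cases h : t = cs.simple i
  · simp [h, cs.simple_mul_simple_self, cs.simple_mul_simple_cancel_left, mul_assoc]
  · simp only [if_neg h, if_neg (fun hh => h ((sigStep_fix_iff cs i t).mp hh))]
    rw [Prod.mk.injEq]
    constructor
    · simp [mul_assoc, cs.simple_mul_simple_cancel_left]
    · rfl

/-- The sign action of a simple reflection, as a permutation. -/
def sigPerm (i : B) : Equiv.Perm (W × ℤˣ) :=
  Function.Involutive.toPerm _ (sigStep_invol cs i)

lemma sigPerm_apply (i : B) (p : W × ℤˣ) : sigPerm cs i p = sigStep cs i p := rfl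


lemma sigPerm_pow (i i' : B) (k : ℕ) (t : W) (e : ℤˣ) :
    ((sigPerm cs i * sigPerm cs i') ^ k) (t, e) =
      ((cs.simple i * cs.simple i') ^ k * t * ((cs.simple i * cs.simple i') ^ k)⁻¹,
        e * ∏ x ∈ Finset.range (2 * k),
          (if t = cs.simple i * (cs.simple i * cs.simple i') ^ (x + 1) then (-1 : ℤˣ) else 1)) := by
  set a := cs.simple i * cs.simple i' with ha
  have hbase : a⁻¹ * cs.simple i = cs.simple i * a := by
    rw [ha, mul_inv_rev, cs.inv_simple, cs.inv_simple, mul_assoc, cs.simple_mul_simple_self,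
      mul_one, ← mul_assoc, cs.simple_mul_simple_self, one_mul]
  have hcomm : ∀ n : ℕ, (a ^ n)⁻¹ * cs.simple i = cs.simple i * a ^ n := by
    intro n
    induction n with
    | zero => simp
    | succ n ihn =>
      rw [pow_succ' (a := a), mul_inv_rev, mul_assoc, hbase, ← mul_assoc, ihn,
        mul_assoc, ← pow_succ', ← pow_succ]
  have hsi' : cs.simple i' = cs.simple i * a := by
    rw [ha, ← mul_assoc, cs.simple_mul_simple_self, one_mul]
  have hainv : cs.simple i' * cs.simple i = a⁻¹ := by
    rw [ha, mul_inv_rev, cs.inv_simple, cs.inv_simple]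
  have key1 : ∀ n : ℕ, (a ^ n)⁻¹ * cs.simple i' * a ^ n = cs.simple i * a ^ (2 * n + 1) := by
    intro n
    have h2 : n + (n + 1) = 2 * n + 1 := by omega
    calc (a ^ n)⁻¹ * cs.simple i' * a ^ n
        = ((a ^ n)⁻¹ * cs.simple i) * (a * a ^ n) := by rw [hsi']; group
      _ = cs.simple i * a ^ n * (a * a ^ n) := by rw [hcomm]
      _ = cs.simple i * (a ^ n * (a ^ (n + 1))) := by rw [← pow_succ']; group
      _ = cs.simple i * a ^ (2 * n + 1) := by rw [← pow_add, h2]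
  have key2 : ∀ n : ℕ, (a ^ n)⁻¹ * (cs.simple i' * cs.simple i * cs.simple i') * a ^ n
      = cs.simple i * a ^ (2 * n + 2) := by
    intro n
    have h2 : n + 2 + n = 2 * n + 2 := by omega
    have hsss : cs.simple i' * cs.simple i * cs.simple i' = cs.simple i * a ^ 2 := by
      calc cs.simple i' * cs.simple i * cs.simple i'
          = cs.simple i * (a * ((cs.simple i * cs.simple i) * a)) := by
            rw [hsi']; group
        _ = cs.simple i * (a * a) := by rw [cs.simple_mul_simple_self, one_mul]
        _ = cs.simple i * a ^ 2 := by rw [pow_two]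
    calc (a ^ n)⁻¹ * (cs.simple i' * cs.simple i * cs.simple i') * a ^ n
        = ((a ^ n)⁻¹ * cs.simple i) * (a ^ 2 * a ^ n) := by rw [hsss]; group
      _ = cs.simple i * a ^ n * (a ^ 2 * a ^ n) := by rw [hcomm]
      _ = cs.simple i * (a ^ (n + 2 + n)) := by rw [pow_add, pow_add]; group
      _ = cs.simple i * a ^ (2 * n + 2) := by rw [h2]
  induction k with
  | zero => simp
  | succ k ih =>
    rw [pow_succ' (a := sigPerm cs i * sigPerm cs i'), Equiv.Perm.mul_apply, ih,
      Equiv.Perm.mul_apply, sigPerm_apply, sigPerm_apply]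
    unfold sigStep
    dsimp only
    have hc1 : (a ^ k * t * (a ^ k)⁻¹ = cs.simple i') ↔ (t = cs.simple i * a ^ (2 * k + 1)) := by
      rw [← key1 k]
      constructor
      · intro h; rw [← h]; group
      · intro h; rw [h]; group
    have hc2 : (cs.simple i' * (a ^ k * t * (a ^ k)⁻¹) * cs.simple i' = cs.simple i)
        ↔ (t = cs.simple i * a ^ (2 * k + 2)) := by
      rw [← key2 k]
      constructor
      · intro h
        have h2 : cs.simple i' * (cs.simple i' * (a ^ k * t * (a ^ k)⁻¹) * cs.simple i') *
            cs.simple i' = cs.simple i' * cs.simple i * cs.simple i' := by rw [h]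
        have h3 : a ^ k * t * (a ^ k)⁻¹ = cs.simple i' * cs.simple i * cs.simple i' := by
          simpa [mul_assoc, cs.simple_mul_simple_cancel_left, cs.simple_mul_simple_self]
            using h2
        rw [← h3]; group
      · intro h
        rw [h]
        have h4 : cs.simple i' *
            (a ^ k * ((a ^ k)⁻¹ * (cs.simple i' * cs.simple i * cs.simple i') * a ^ k) *
              (a ^ k)⁻¹) * cs.simple i'
            = cs.simple i' * (cs.simple i' * cs.simple i * cs.simple i') * cs.simple i' := by
          group
        rw [h4]
        simp [mul_assoc, cs.simple_mul_simple_cancel_left, cs.simple_mul_simple_self]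
    rw [Prod.mk.injEq]
    constructor
    · -- first components
      show cs.simple i * (cs.simple i' * (a ^ k * t * (a ^ k)⁻¹) * cs.simple i') * cs.simple i
          = a ^ (k + 1) * t * (a ^ (k + 1))⁻¹
      have : cs.simple i * (cs.simple i' * (a ^ k * t * (a ^ k)⁻¹) * cs.simple i') * cs.simple i
          = (cs.simple i * cs.simple i') * (a ^ k * t * (a ^ k)⁻¹) * (cs.simple i' * cs.simple i)
          := by group
      rw [this, hainv, ← ha, pow_succ' (a := a)]
      group
    · -- second components
      rw [hc1, hc2]
      have hsplit : 2 * (k + 1) = 2 * k + 1 + 1 := by omega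
      rw [hsplit, Finset.prod_range_succ, Finset.prod_range_succ]
      have e1 : 2 * k + 0 + 1 = 2 * k + 1 := by omega
      by_cases h1 : t = cs.simple i * a ^ (2 * k + 1) <;>
        by_cases h2 : t = cs.simple i * a ^ (2 * k + 1 + 1)
      · rw [if_pos h1, if_pos (by rw [show 2*k+1+1 = 2*k+2 by omega] at h2; exact h2),
          if_pos h1, if_pos h2]
        simp
      · rw [if_pos h1, if_neg (by rw [show 2*k+1+1 = 2*k+2 by omega] at h2 ⊢; exact h2),
          if_pos h1, if_neg h2]
        simp
      · rw [if_neg h1, if_pos (by rw [show 2*k+1+1 = 2*k+2 by omega] at h2; exact h2),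
          if_neg h1, if_pos h2]
        simp
      · rw [if_neg h1, if_neg (by rw [show 2*k+1+1 = 2*k+2 by omega] at h2 ⊢; exact h2),
          if_neg h1, if_neg h2]
        simp

lemma sigLiftable : M.IsLiftable (fun i => sigPerm cs i) := by
  intro i i'
  refine Equiv.ext fun p => ?_
  obtain ⟨t, e⟩ := p
  rw [Equiv.Perm.one_apply, sigPerm_pow]
  rw [cs.simple_mul_simple_pow i i']
  rw [Prod.mk.injEq]
  constructor
  · simp
  · have h2 : 2 * M i i' = M i i' + M i i' := by omega
    rw [h2, Finset.prod_range_add]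
    have hshift : ∀ x : ℕ,
        (if t = cs.simple i * (cs.simple i * cs.simple i') ^ (M i i' + x + 1) then (-1 : ℤˣ)
          else 1)
          = (if t = cs.simple i * (cs.simple i * cs.simple i') ^ (x + 1) then (-1 : ℤˣ) else 1)
        := by
      intro x
      have : (cs.simple i * cs.simple i') ^ (M i i' + x + 1)
          = (cs.simple i * cs.simple i') ^ (x + 1) := by
        have hexp : M i i' + x + 1 = (M i i') + (x + 1) := by omega
        rw [hexp, pow_add, cs.simple_mul_simple_pow i i', one_mul]
      rw [this]
    have : (∏ x ∈ Finset.range (M i i'),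
        (if t = cs.simple i * (cs.simple i * cs.simple i') ^ (M i i' + x + 1) then (-1 : ℤˣ)
          else 1))
        = ∏ x ∈ Finset.range (M i i'),
        (if t = cs.simple i * (cs.simple i * cs.simple i') ^ (x + 1) then (-1 : ℤˣ) else 1) := by
      apply Finset.prod_congr rfl
      intro x _
      exact hshift x
    rw [this, Int.units_mul_self, mul_one]

/-- The sign representation on `W × ℤˣ` used to prove the strong exchange property. -/
def sgnHom : W →* Equiv.Perm (W × ℤˣ) :=
  cs.lift ⟨fun i => sigPerm cs i, sigLiftable cs⟩

lemma sgnHom_simple (i : B) : sgnHom cs (cs.simple i) = sigPerm cs i :=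
  cs.lift_apply_simple (sigLiftable cs) i

/-- The sign of the reflection `t` with respect to `w`:  `-1` iff `t` is a right inversion. -/
def SGN (w t : W) : ℤˣ := ((sgnHom cs w) (t, 1)).2

lemma sgnHom_apply (w t : W) (e : ℤˣ) :
    sgnHom cs w (t, e) = (w * t * w⁻¹, e * SGN cs w t) := by
  obtain ⟨ω, rfl⟩ := cs.wordProd_surjective w
  induction ω generalizing t e with
  | nil =>
    simp only [wordProd_nil, map_one, Equiv.Perm.one_apply, SGN]
    simp
  | cons j ω ih =>
    have hexp : sgnHom cs (cs.wordProd (j :: ω)) = sigPerm cs j * sgnHom cs (cs.wordProd ω) := by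
      rw [cs.wordProd_cons, map_mul, sgnHom_simple]
    rw [hexp, Equiv.Perm.mul_apply, ih, sigPerm_apply]
    unfold sigStep
    dsimp only
    rw [Prod.mk.injEq]
    constructor
    · rw [cs.wordProd_cons, mul_inv_rev, cs.inv_simple]
      group
    · unfold SGN
      rw [hexp, Equiv.Perm.mul_apply, ih, sigPerm_apply]
      unfold sigStep
      dsimp only
      by_cases hcond : cs.wordProd ω * t * (cs.wordProd ω)⁻¹ = cs.simple j
      · rw [if_pos hcond, if_pos hcond]
        simp [mul_comm, mul_assoc]
      · rw [if_neg hcond, if_neg hcond]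

lemma SGN_mul (w v t : W) : SGN cs (w * v) t = SGN cs v t * SGN cs w (v * t * v⁻¹) := by
  unfold SGN
  rw [map_mul, Equiv.Perm.mul_apply, sgnHom_apply, sgnHom_apply]
  simp [SGN]

lemma SGN_simple (j : B) (t : W) :
    SGN cs (cs.simple j) t = if t = cs.simple j then -1 else 1 := by
  unfold SGN
  rw [sgnHom_simple, sigPerm_apply]
  unfold sigStep
  by_cases h : t = cs.simple j <;> simp [h]

lemma SGN_one (t : W) : SGN cs 1 t = 1 := by
  unfold SGN
  simp

lemma SGN_eq_one_of_not_mem_ris (ω : List B) (t : W) (h : t ∉ cs.rightInvSeq ω) :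
    SGN cs (cs.wordProd ω) t = 1 := by
  induction ω with
  | nil => simpa using SGN_one cs t
  | cons j ω ih =>
    have hris : cs.rightInvSeq (j :: ω)
        = ((cs.wordProd ω)⁻¹ * cs.simple j * cs.wordProd ω) :: cs.rightInvSeq ω := rfl
    rw [hris, List.mem_cons, not_or] at h
    obtain ⟨h1, h2⟩ := h
    rw [cs.wordProd_cons, SGN_mul, ih h2, SGN_simple, one_mul]
    rw [if_neg]
    · intro hc
      apply h1
      rw [← hc]
      group
    
lemma SGN_eq_neg_one_of_mem_ris {ω : List B} (hω : cs.IsReduced ω) {t : W}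
    (h : t ∈ cs.rightInvSeq ω) : SGN cs (cs.wordProd ω) t = -1 := by
  induction ω with
  | nil => simp at h
  | cons j ω ih =>
    have hωred : cs.IsReduced ω := by
      have := CoxeterSystem.IsReduced.drop (ω := j :: ω) hω 1
      simpa using this
    have hnd := hω.nodup_rightInvSeq
    have hris : cs.rightInvSeq (j :: ω)
        = ((cs.wordProd ω)⁻¹ * cs.simple j * cs.wordProd ω) :: cs.rightInvSeq ω := rfl
    rw [hris, List.nodup_cons] at hnd
    obtain ⟨hhead, _⟩ := hnd
    rw [hris, List.mem_cons] at h
    rw [cs.wordProd_cons, SGN_mul]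
    rcases h with h | h
    · have h2 : t ∉ cs.rightInvSeq ω := by rw [h]; exact hhead
      rw [SGN_eq_one_of_not_mem_ris cs ω t h2, one_mul, SGN_simple, if_pos]
      rw [h]; group
    · have hne : t ≠ (cs.wordProd ω)⁻¹ * cs.simple j * cs.wordProd ω := by
        intro hc; rw [← hc] at hhead; exact hhead h
      rw [ih hωred h, SGN_simple, if_neg, mul_one]
      intro hc
      apply hne
      rw [← hc]
      group

lemma SGN_refl_self {t : W} (ht : cs.IsReflection t) : SGN cs t t = -1 := by
  obtain ⟨u, j, rfl⟩ := ht
  set t := u * cs.simple j * u⁻¹ with hT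
  have hutu : u⁻¹ * t * u = cs.simple j := by rw [hT]; group
  have hpair : SGN cs u⁻¹ t * SGN cs u (cs.simple j) = 1 := by
    have h1 : SGN cs (u * u⁻¹) t = SGN cs u⁻¹ t * SGN cs u (u⁻¹ * t * (u⁻¹)⁻¹) :=
      SGN_mul cs u u⁻¹ t
    rw [inv_inv, hutu] at h1
    rw [← h1, mul_inv_cancel]
    exact SGN_one cs t
  have hdecomp : t = u * (cs.simple j * u⁻¹) := by rw [hT]; group
  have e2 : (cs.simple j * u⁻¹) * t * (cs.simple j * u⁻¹)⁻¹ = cs.simple j := by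
    have hinv : (cs.simple j * u⁻¹)⁻¹ = u * cs.simple j := by
      rw [mul_inv_rev, inv_inv, cs.inv_simple]
    rw [hinv, hT]
    have h1 : cs.simple j * u⁻¹ * (u * cs.simple j * u⁻¹) * (u * cs.simple j)
        = cs.simple j * cs.simple j * cs.simple j := by group
    rw [h1, cs.simple_mul_simple_self, one_mul]
  have e3 : SGN cs (cs.simple j * u⁻¹) t = SGN cs u⁻¹ t * -1 := by
    have h1 : SGN cs (cs.simple j * u⁻¹) t
        = SGN cs u⁻¹ t * SGN cs (cs.simple j) (u⁻¹ * t * (u⁻¹)⁻¹) :=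
      SGN_mul cs (cs.simple j) u⁻¹ t
    rw [inv_inv, hutu, SGN_simple, if_pos rfl] at h1
    exact h1
  have final := SGN_mul cs u (cs.simple j * u⁻¹) t
  rw [← hdecomp] at final
  rw [e2, e3] at final
  rw [final, mul_right_comm, hpair, one_mul]

/-- Characterization of right inversions via the sign representation. -/
lemma SGN_eq_neg_one_iff (w t : W) :
    SGN cs w t = -1 ↔ cs.IsRightInversion w t := by
  constructor
  · intro h
    obtain ⟨ω, hred, rfl⟩ := cs.exists_reduced_word' w
    by_cases hmem : t ∈ cs.rightInvSeq ω
    · exact cs.isRightInversion_of_mem_rightInvSeq hred hmem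
    · rw [SGN_eq_one_of_not_mem_ris cs ω t hmem] at h
      exact absurd h (by decide)
  · rintro ⟨hrefl, hlen⟩
    have hv : SGN cs (w * t) t = 1 := by
      rcases Int.units_eq_one_or (SGN cs (w * t) t) with h1 | h1
      · exact h1
      · exfalso
        obtain ⟨ω, hred, hprod⟩ := cs.exists_reduced_word' (w * t)
        rw [hprod] at h1
        by_cases hmem : t ∈ cs.rightInvSeq ω
        · have hinv := cs.isRightInversion_of_mem_rightInvSeq hred hmem
          rw [← hprod] at hinv
          have : cs.length (w * t * t) < cs.length (w * t) := hinv.2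
          rw [mul_assoc, hrefl.mul_self, mul_one] at this
          omega
        · rw [SGN_eq_one_of_not_mem_ris cs ω t hmem] at h1
          exact absurd h1 (by decide)
    have hw : w = (w * t) * t := by rw [mul_assoc, hrefl.mul_self, mul_one]
    have := SGN_mul cs (w * t) t t
    rw [← hw] at this
    rw [this, SGN_refl_self cs hrefl]
    have harg : t * t * t⁻¹ = t := by rw [hrefl.mul_self, one_mul, hrefl.inv]
    rw [harg, hv, mul_one]

/-- The strong exchange property. -/
lemma mem_rightInvSeq_iff {ω : List B} (hred : cs.IsReduced ω) (t : W) :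
    t ∈ cs.rightInvSeq ω ↔ cs.IsRightInversion (cs.wordProd ω) t := by
  constructor
  · exact cs.isRightInversion_of_mem_rightInvSeq hred
  · intro h
    by_contra hmem
    have := SGN_eq_one_of_not_mem_ris cs ω t hmem
    rw [(SGN_eq_neg_one_iff cs _ t).mpr h] at this
    exact absurd this (by decide)

/-- The set of right inversions of `w`. -/
def invR (w : W) : Set W := {t | cs.IsRightInversion w t}

lemma invR_eq_ris {ω : List B} (hred : cs.IsReduced ω) :
    invR cs (cs.wordProd ω) = {t | t ∈ cs.rightInvSeq ω} := by
  ext t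
  exact (mem_rightInvSeq_iff cs hred t).symm

lemma invR_eq_coe_toFinset {ω : List B} (hred : cs.IsReduced ω) :
    invR cs (cs.wordProd ω) = ↑(cs.rightInvSeq ω).toFinset := by
  rw [invR_eq_ris cs hred]
  ext t
  simp

lemma invR_finite (w : W) : (invR cs w).Finite := by
  obtain ⟨ω, hred, rfl⟩ := cs.exists_reduced_word' w
  rw [invR_eq_coe_toFinset cs hred]
  exact (cs.rightInvSeq ω).toFinset.finite_toSet

lemma ncard_invR (w : W) : (invR cs w).ncard = cs.length w := by
  obtain ⟨ω, hred, rfl⟩ := cs.exists_reduced_word' w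
  rw [invR_eq_coe_toFinset cs hred, Set.ncard_coe_finset,
    List.toFinset_card_of_nodup hred.nodup_rightInvSeq, cs.length_rightInvSeq, hred]

lemma ris_append (l₁ l₂ : List B) :
    cs.rightInvSeq (l₁ ++ l₂)
      = (cs.rightInvSeq l₁).map (fun t => (cs.wordProd l₂)⁻¹ * t * cs.wordProd l₂)
          ++ cs.rightInvSeq l₂ := by
  induction l₁ with
  | nil => simp
  | cons j l₁ ih =>
    have h1 : cs.rightInvSeq (j :: (l₁ ++ l₂))
        = ((cs.wordProd (l₁ ++ l₂))⁻¹ * cs.simple j * cs.wordProd (l₁ ++ l₂))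
            :: cs.rightInvSeq (l₁ ++ l₂) := rfl
    have h2 : cs.rightInvSeq (j :: l₁)
        = ((cs.wordProd l₁)⁻¹ * cs.simple j * cs.wordProd l₁) :: cs.rightInvSeq l₁ := rfl
    rw [List.cons_append, h1, ih, h2, List.map_cons, List.cons_append]
    congr 1
    rw [cs.wordProd_append, mul_inv_rev]
    group

lemma wordProd_mem (H : Subgroup W) {ω : List B} (h : ∀ i ∈ ω, cs.simple i ∈ H) :
    cs.wordProd ω ∈ H := by
  induction ω with
  | nil => simp [one_mem]
  | cons j ω ih =>
    rw [cs.wordProd_cons]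
    exact mul_mem (h j (List.mem_cons_self)) (ih fun i hi => h i (List.mem_cons_of_mem j hi))

lemma mem_of_mem_ris (H : Subgroup W) {ω : List B} (h : ∀ i ∈ ω, cs.simple i ∈ H) {t : W}
    (ht : t ∈ cs.rightInvSeq ω) : t ∈ H := by
  induction ω with
  | nil => simp at ht
  | cons j ω ih =>
    have h2 : cs.rightInvSeq (j :: ω)
        = ((cs.wordProd ω)⁻¹ * cs.simple j * cs.wordProd ω) :: cs.rightInvSeq ω := rfl
    rw [h2, List.mem_cons] at ht
    have hωmem : ∀ i ∈ ω, cs.simple i ∈ H := fun i hi => h i (List.mem_cons_of_mem j hi)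
    rcases ht with rfl | ht
    · exact mul_mem (mul_mem (inv_mem (wordProd_mem cs H hωmem))
        (h j (List.mem_cons_self))) (wordProd_mem cs H hωmem)
    · exact ih hωmem ht

/-- Any word contains a reduced sublist spelling the same element. -/
lemma exists_reduced_sublist : ∀ (n : ℕ) (ω : List B), ω.length ≤ n →
    ∃ l, List.Sublist l ω ∧ cs.IsReduced l ∧ cs.wordProd l = cs.wordProd ω := by
  intro n
  induction n with
  | zero =>
    intro ω h
    have : ω = [] := List.eq_nil_of_length_eq_zero (Nat.le_zero.mp h)
    subst this
    exact ⟨[], List.Sublist.refl _, by simp [CoxeterSystem.IsReduced], rfl⟩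
  | succ n ih =>
    intro ω hlen
    by_cases hred : cs.IsReduced ω
    · exact ⟨ω, List.Sublist.refl _, hred, rfl⟩
    rcases List.eq_nil_or_concat ω with rfl | ⟨ζ, i, rfl⟩
    · exact ⟨[], List.Sublist.refl _, by simp [CoxeterSystem.IsReduced], rfl⟩
    have hζlen : ζ.length ≤ n := by
      rw [List.concat_eq_append, List.length_append] at hlen
      simpa using hlen
    obtain ⟨l₁, hsub1, hred1, hprod1⟩ := ih ζ hζlen
    have hprodω : cs.wordProd (ζ.concat i) = cs.wordProd ζ * cs.simple i := cs.wordProd_concat i ζ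
    rcases cs.length_mul_simple (cs.wordProd ζ) i with hup | hdown
    · -- ascent: l₁ ++ [i] works
      refine ⟨l₁ ++ [i], ?_, ?_, ?_⟩
      · rw [List.concat_eq_append]
        exact List.Sublist.append hsub1 (List.Sublist.refl _)
      · show cs.length (cs.wordProd (l₁ ++ [i])) = (l₁ ++ [i]).length
        rw [cs.wordProd_append, List.length_append]
        have hsi : cs.wordProd [i] = cs.simple i := by simp [cs.wordProd_cons]
        rw [hsi, hprod1, hup, ← hprod1, hred1]
        simp
      · rw [cs.wordProd_append, hprodω, hprod1]
        congr 1
        simp [cs.wordProd_cons]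
    · -- descent: use strong exchange to shorten
      have hinv : cs.IsRightInversion (cs.wordProd l₁) (cs.simple i) := by
        constructor
        · exact cs.isReflection_simple i
        · rw [hprod1]; omega
      have hmem := (mem_rightInvSeq_iff cs hred1 _).mpr hinv
      obtain ⟨j, hj, hjt⟩ := List.mem_iff_getElem.mp hmem
      have hjlt : j < l₁.length := by
        rw [cs.length_rightInvSeq] at hj
        exact hj
      have hgetD : (cs.rightInvSeq l₁).getD j 1 = cs.simple i := by
        rw [List.getD_eq_getElem _ _ hj, hjt]
      have herase : cs.wordProd l₁ * cs.simple i = cs.wordProd (l₁.eraseIdx j) := by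
        rw [← hgetD]
        exact cs.wordProd_mul_getD_rightInvSeq l₁ j
      have hlen2 : (l₁.eraseIdx j).length ≤ n := by
        have h1 : l₁.length ≤ ζ.length := hsub1.length_le
        have h2 := List.length_eraseIdx_add_one hjlt
        omega
      obtain ⟨l, hsub, hred', hprod'⟩ := ih (l₁.eraseIdx j) hlen2
      refine ⟨l, ?_, hred', ?_⟩
      · refine hsub.trans (((l₁.eraseIdx_sublist j).trans hsub1).trans ?_)
        rw [List.concat_eq_append]
        exact List.sublist_append_left ζ [i]
      · rw [hprod', ← herase, hprod1, hprodω]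

/-- Every element of a parabolic subgroup is spelled by some word whose letters
lie in the parabolic. -/
lemma exists_word_letters_mem (X : Set B) (w : W) (hw : w ∈ parabolic cs X) :
    ∃ ω : List B, cs.wordProd ω = w ∧ ∀ i ∈ ω, cs.simple i ∈ parabolic cs X := by
  induction hw using Subgroup.closure_induction with
  | mem x hx =>
    obtain ⟨j, hj, rfl⟩ := hx
    exact ⟨[j], by simp [cs.wordProd_cons], by
      intro i hi
      have hij : i = j := List.mem_singleton.mp hi
      rw [hij]
      exact Subgroup.subset_closure ⟨j, hj, rfl⟩⟩
  | one => exact ⟨[], by simp, by simp⟩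
  | mul x y hx hy ihx ihy =>
    obtain ⟨ω₁, hp1, hl1⟩ := ihx
    obtain ⟨ω₂, hp2, hl2⟩ := ihy
    refine ⟨ω₁ ++ ω₂, by rw [cs.wordProd_append, hp1, hp2], ?_⟩
    intro i hi
    rcases List.mem_append.mp hi with h | h
    · exact hl1 i h
    · exact hl2 i h
  | inv x hx ihx =>
    obtain ⟨ω₁, hp1, hl1⟩ := ihx
    refine ⟨ω₁.reverse, by rw [cs.wordProd_reverse, hp1], ?_⟩
    intro i hi
    exact hl1 i (List.mem_reverse.mp hi)

lemma exists_reduced_word_subgroup (X : Set B) (w : W) (hw : w ∈ parabolic cs X) :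
    ∃ ω : List B, cs.IsReduced ω ∧ cs.wordProd ω = w ∧
      ∀ i ∈ ω, cs.simple i ∈ parabolic cs X := by
  obtain ⟨ω₀, hp0, hl0⟩ := exists_word_letters_mem cs X w hw
  obtain ⟨l, hsub, hred, hprod⟩ := exists_reduced_sublist cs ω₀.length ω₀ le_rfl
  exact ⟨l, hred, by rw [hprod, hp0], fun i hi => hl0 i (hsub.subset hi)⟩

/-- Letters of any reduced word of an element of a parabolic lie in the parabolic. -/
lemma simple_mem_parabolic_of_mem_reduced (X : Set B) :
    ∀ (ω : List B), cs.IsReduced ω → cs.wordProd ω ∈ parabolic cs X →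
      ∀ i ∈ ω, cs.simple i ∈ parabolic cs X := by
  intro ω
  induction ω with
  | nil => simp
  | cons j ω ih =>
    intro hred hmem i hi
    have hredω : cs.IsReduced ω := by
      have := CoxeterSystem.IsReduced.drop (ω := j :: ω) hred 1
      simpa using this
    have hsj : cs.simple j ∈ parabolic cs X := by
      have hinv : cs.IsRightInversion (cs.wordProd (j :: ω))⁻¹ (cs.simple j) := by
        constructor
        · exact cs.isReflection_simple j
        · have h1 : (cs.wordProd (j :: ω))⁻¹ * cs.simple j = (cs.wordProd ω)⁻¹ := by
            rw [cs.wordProd_cons, mul_inv_rev, cs.inv_simple, mul_assoc,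
              cs.simple_mul_simple_self, mul_one]
          rw [h1, cs.length_inv, cs.length_inv, hred, hredω]
          simp
      obtain ⟨l₀, hred₀, hprod₀, hlet₀⟩ :=
        exists_reduced_word_subgroup cs X (cs.wordProd (j :: ω))⁻¹ (inv_mem hmem)
      have hm : cs.simple j ∈ cs.rightInvSeq l₀ := by
        rw [mem_rightInvSeq_iff cs hred₀, hprod₀]
        exact hinv
      exact mem_of_mem_ris cs _ hlet₀ hm
    rcases List.mem_cons.mp hi with rfl | hi'
    · exact hsj
    · have hωmem : cs.wordProd ω ∈ parabolic cs X := by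
        have h2 : cs.wordProd ω = cs.simple j * cs.wordProd (j :: ω) := by
          rw [cs.wordProd_cons, ← mul_assoc, cs.simple_mul_simple_self, one_mul]
        rw [h2]
        exact mul_mem hsj hmem
      exact ih hredω hωmem i hi'

/-! ### Bruhat order basics -/

lemma bruhatLE_length_le {x y : W} (h : BruhatLE cs x y) : cs.length x ≤ cs.length y := by
  induction h with
  | refl => exact le_refl _
  | tail _ hbc ih => exact ih.trans (le_of_lt hbc.2)

lemma bruhatLE_eq_of_length_ge {x y : W} (h : BruhatLE cs x y)
    (hl : cs.length y ≤ cs.length x) : x = y := by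
  induction h with
  | refl => rfl
  | @tail b c hab hbc ih =>
    exfalso
    have h1 : cs.length x ≤ cs.length b := bruhatLE_length_le cs hab
    have h2 : cs.length b < cs.length c := hbc.2
    omega

lemma isMaxOf_unique {P : Set W} {m₁ m₂ : W} (h₁ : IsMaxOf cs P m₁) (h₂ : IsMaxOf cs P m₂) :
    m₁ = m₂ := by
  have hb : BruhatLE cs m₁ m₂ := h₂.2 m₁ h₁.1
  have hb' : BruhatLE cs m₂ m₁ := h₁.2 m₂ h₂.1
  exact bruhatLE_eq_of_length_ge cs hb (bruhatLE_length_le cs hb')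

/-! ### Doset and parabolic plumbing -/

lemma parabolic_mono {X Y : Set B} (h : X ⊆ Y) : parabolic cs X ≤ parabolic cs Y :=
  Subgroup.closure_mono (Set.image_mono h)

lemma simple_mem_parabolic {X : Set B} {j : B} (hj : j ∈ X) :
    cs.simple j ∈ parabolic cs X :=
  Subgroup.subset_closure ⟨j, hj, rfl⟩

lemma mem_doset_self (I J : Set B) (w : W) : w ∈ doset cs I J w :=
  ⟨1, one_mem _, 1, one_mem _, by simp⟩

lemma doset_eq_of_mem {I J : Set B} {w x : W} (h : x ∈ doset cs I J w) :
    doset cs I J x = doset cs I J w := by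
  obtain ⟨a, ha, b, hb, rfl⟩ := h
  ext y
  constructor
  · rintro ⟨a', ha', b', hb', rfl⟩
    exact ⟨a' * a, mul_mem ha' ha, b * b', mul_mem hb hb', by group⟩
  · rintro ⟨a', ha', b', hb', rfl⟩
    exact ⟨a' * a⁻¹, mul_mem ha' (inv_mem ha), b⁻¹ * b', mul_mem (inv_mem hb) hb', by group⟩

lemma doset_mul_right_mem {I J : Set B} {w x c : W} (h : x ∈ doset cs I J w)
    (hc : c ∈ parabolic cs J) : x * c ∈ doset cs I J w := by
  obtain ⟨a, ha, b, hb, rfl⟩ := h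
  exact ⟨a, ha, b * c, mul_mem hb hc, by group⟩

lemma doset_mul_left_mem {I J : Set B} {w x c : W} (h : x ∈ doset cs I J w)
    (hc : c ∈ parabolic cs I) : c * x ∈ doset cs I J w := by
  obtain ⟨a, ha, b, hb, rfl⟩ := h
  exact ⟨c * a, mul_mem hc ha, b, hb, by group⟩

/-! ### Demazure fold lemmas -/

lemma demWord_cons (x : W) (j : B) (l : List B) :
    demWord cs x (j :: l) = demWord cs (demStep cs x j) l := rfl

lemma demWord_concat (x : W) (l : List B) (j : B) :
    demWord cs x (l ++ [j]) = demStep cs (demWord cs x l) j := by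
  simp [demWord, List.foldl_append]

lemma demStep_cases (x : W) (j : B) :
    (demStep cs x j = x * cs.simple j
        ∧ cs.length (x * cs.simple j) = cs.length x + 1) ∨
      (demStep cs x j = x ∧ cs.length (x * cs.simple j) + 1 = cs.length x) := by
  rcases cs.length_mul_simple x j with h | h
  · left
    refine ⟨?_, h⟩
    unfold demStep
    rw [if_pos (by omega)]
  · right
    refine ⟨?_, h⟩
    unfold demStep
    rw [if_neg (by omega)]

lemma demWord_fix {x : W} {l : List B}
    (h : ∀ i ∈ l, cs.length (x * cs.simple i) < cs.length x) : demWord cs x l = x := by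
  induction l with
  | nil => rfl
  | cons j l ih =>
    rw [demWord_cons]
    have hstep : demStep cs x j = x := by
      unfold demStep
      rw [if_neg (by have := h j (List.mem_cons_self); omega)]
    rw [hstep]
    exact ih fun i hi => h i (List.mem_cons_of_mem j hi)

lemma demWord_mul_mem (H : Subgroup W) {l : List B} (hl : ∀ i ∈ l, cs.simple i ∈ H) :
    ∀ x : W, x⁻¹ * demWord cs x l ∈ H := by
  induction l with
  | nil =>
    intro x
    show x⁻¹ * x ∈ H
    rw [inv_mul_cancel]
    exact one_mem _
  | cons j l ih =>
    intro x
    rw [demWord_cons]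
    have h1 : x⁻¹ * demStep cs x j ∈ H := by
      unfold demStep
      split
      · have : x⁻¹ * (x * cs.simple j) = cs.simple j := by group
        rw [this]
        exact hl j (List.mem_cons_self)
      · rw [inv_mul_cancel]
        exact one_mem _
    have h2 := ih (fun i hi => hl i (List.mem_cons_of_mem j hi)) (demStep cs x j)
    have h3 : x⁻¹ * demWord cs (demStep cs x j) l
        = (x⁻¹ * demStep cs x j) * ((demStep cs x j)⁻¹ * demWord cs (demStep cs x j) l) := by
      group
    rw [h3]
    exact mul_mem h1 h2

lemma demWord_length_additive (l : List B) :
    ∀ x : W, cs.length (demWord cs x l)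
      = cs.length x + cs.length (x⁻¹ * demWord cs x l) := by
  induction l with
  | nil =>
    intro x
    show cs.length x = cs.length x + cs.length (x⁻¹ * x)
    rw [inv_mul_cancel, cs.length_one]
    omega
  | cons j l ih =>
    intro x
    rw [demWord_cons]
    rcases demStep_cases cs x j with ⟨heq, hlen⟩ | ⟨heq, hlen⟩
    · have h2 := ih (demStep cs x j)
      rw [heq] at h2 ⊢
      set D := demWord cs (x * cs.simple j) l with hD
      have t1 : cs.length (x⁻¹ * D) ≤ cs.length ((x * cs.simple j)⁻¹ * D) + 1 := by
        have hx : cs.simple j * ((x * cs.simple j)⁻¹ * D) = x⁻¹ * D := by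
          rw [mul_inv_rev, cs.inv_simple, ← mul_assoc, ← mul_assoc,
            cs.simple_mul_simple_self, one_mul]
        rw [← hx]
        have := cs.length_mul_le (cs.simple j) ((x * cs.simple j)⁻¹ * D)
        rw [cs.length_simple] at this
        omega
      have t2 : cs.length D ≤ cs.length x + cs.length (x⁻¹ * D) := by
        have hx : D = x * (x⁻¹ * D) := by group
        conv_lhs => rw [hx]
        exact cs.length_mul_le _ _
      omega
    · rw [heq]
      exact ih x

/-- The key fold lemma: folding a reduced word onto any element produces an element
that factors through the full word, with additive lengths. -/
lemma demWord_top (x : W) : ∀ (l : List B), cs.IsReduced l →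
    ∃ y, demWord cs x l = y * cs.wordProd l
      ∧ cs.length (demWord cs x l) = cs.length y + cs.length (cs.wordProd l) := by
  intro l
  induction l using List.reverseRecOn with
  | nil =>
    intro _
    exact ⟨x, by simp [demWord], by simp [demWord]⟩
  | append_singleton l j ih =>
    intro hl
    have hred' : cs.IsReduced l := by
      have := CoxeterSystem.IsReduced.take hl l.length
      rwa [List.take_left] at this
    obtain ⟨y, hy, hylen⟩ := ih hred'
    set r := demWord cs x l with hr
    set g := cs.wordProd l with hg
    have hgs : cs.wordProd (l ++ [j]) = g * cs.simple j := by
      rw [cs.wordProd_append]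
      simp [cs.wordProd_cons, hg]
    have hllen : cs.length g = l.length := hred'
    have hfulllen : cs.length (cs.wordProd (l ++ [j])) = l.length + 1 := by
      rw [hl]
      simp
    have hasc : cs.length (g * cs.simple j) = cs.length g + 1 := by
      rw [← hgs, hfulllen, hllen]
    have hfold : demWord cs x (l ++ [j]) = demStep cs r j := demWord_concat cs x l j
    rcases demStep_cases cs r j with ⟨heq, hlen⟩ | ⟨heq, hlen⟩
    · refine ⟨y, ?_, ?_⟩
      · rw [hfold, heq, hy, hgs]
        group
      · rw [hfold, heq, hlen, hylen, hgs, hasc]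
        omega
    · have hsjinv : cs.IsRightInversion r (cs.simple j) :=
        ⟨cs.isReflection_simple j, by omega⟩
      obtain ⟨ωy, hωyred, hωyprod⟩ := cs.exists_reduced_word' y
      have hconc_prod : cs.wordProd (ωy ++ l) = r := by
        rw [cs.wordProd_append, ← hωyprod, ← hg, ← hy]
      have hωylen : cs.length y = ωy.length := by rw [hωyprod]; exact hωyred
      have hconc_red : cs.IsReduced (ωy ++ l) := by
        show cs.length (cs.wordProd (ωy ++ l)) = (ωy ++ l).length
        rw [hconc_prod, List.length_append, hylen]
        omega
      have hmem : cs.simple j ∈ cs.rightInvSeq (ωy ++ l) := by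
        rw [mem_rightInvSeq_iff cs hconc_red, hconc_prod]
        exact hsjinv
      rw [ris_append] at hmem
      rcases List.mem_append.mp hmem with hmem1 | hmem2
      · obtain ⟨t₀, ht₀mem, ht₀eq⟩ := List.mem_map.mp hmem1
        have ht₀inv : cs.IsRightInversion y t₀ := by
          have := (mem_rightInvSeq_iff cs hωyred t₀).mp ht₀mem
          rwa [hωyprod]
        set y' := y * t₀ with hy'
        have hy'g : y' * g = r * cs.simple j := by
          rw [← hg] at ht₀eq
          calc y * t₀ * g = (y * g) * (g⁻¹ * t₀ * g) := by group
            _ = r * cs.simple j := by rw [← hy, ht₀eq]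
        have hr_eq : r = y' * (g * cs.simple j) := by
          rw [← mul_assoc, hy'g, mul_assoc, cs.simple_mul_simple_self, mul_one]
        have hlowlen : cs.length y ≤ cs.length y' + 1 := by
          have h1 : cs.length (y' * g) ≤ cs.length y' + cs.length g :=
            cs.length_mul_le _ _
          rw [hy'g] at h1
          omega
        have hhilen : cs.length y' < cs.length y := ht₀inv.2
        refine ⟨y', ?_, ?_⟩
        · rw [hfold, heq, hgs]
          exact hr_eq
        · rw [hfold, heq, hgs, hasc]
          omega
      · exfalso
        have := cs.isRightInversion_of_mem_rightInvSeq hred' hmem2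
        have h2 : cs.length (g * cs.simple j) < cs.length g := this.2
        omega

lemma sgn_neg_parabolic {X : Set B} {b : W} (hb : b ∈ parabolic cs X) {t : W}
    (h : SGN cs b t = -1) : cs.IsReflection t ∧ t ∈ parabolic cs X := by
  obtain ⟨ω, hred, hprod, hlet⟩ := exists_reduced_word_subgroup cs X b hb
  rw [← hprod] at h
  by_cases hmem : t ∈ cs.rightInvSeq ω
  · exact ⟨cs.isReflection_of_mem_rightInvSeq ω hmem, mem_of_mem_ris cs _ hlet hmem⟩
  · rw [SGN_eq_one_of_not_mem_ris cs ω t hmem] at h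
    exact absurd h (by decide)

/-- The central counting lemma: if all reflections of `W_X` are left inversions of `v` and
all reflections of `W_Y` are right inversions of `v`, then `v` has maximal length in
`W_X v W_Y`. -/
lemma length_amb_le {X Y : Set B} {v a b : W} (ha : a ∈ parabolic cs X)
    (hb : b ∈ parabolic cs Y)
    (hX : ∀ t, cs.IsReflection t → t ∈ parabolic cs X → cs.length (t * v) < cs.length v)
    (hY : ∀ t, cs.IsReflection t → t ∈ parabolic cs Y → cs.length (v * t) < cs.length v) :
    cs.length (a * v * b) ≤ cs.length v := by
  set S : Set W := (fun t => b⁻¹ * t * b) '' invR cs v with hS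
  have hsub : invR cs (a * v * b) ⊆ S := by
    intro t ht
    have hsgn : SGN cs (a * v * b) t = -1 := (SGN_eq_neg_one_iff cs _ t).mpr ht
    rw [mul_assoc] at hsgn
    have hdec : SGN cs (a * (v * b)) t
        = (SGN cs b t * SGN cs v (b * t * b⁻¹)) * SGN cs a ((v * b) * t * (v * b)⁻¹) := by
      rw [SGN_mul cs a (v * b) t, SGN_mul cs v b t]
    rw [hdec] at hsgn
    have hgoal : SGN cs v (b * t * b⁻¹) = -1 := by
      by_contra hne
      rcases Int.units_eq_one_or (SGN cs v (b * t * b⁻¹)) with h1 | h1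
      swap
      · exact hne h1
      rw [h1, mul_one] at hsgn
      have habsurd : cs.IsRightInversion v (b * t * b⁻¹) := by
        rcases Int.units_eq_one_or (SGN cs b t) with hb1 | hb1
        · rw [hb1, one_mul] at hsgn
          obtain ⟨hrefl_r, hmem_r⟩ := sgn_neg_parabolic cs ha hsgn
          have hrv := hX _ hrefl_r hmem_r
          constructor
          · have hconj : b * t * b⁻¹ = v⁻¹ * ((v * b) * t * (v * b)⁻¹) * (v⁻¹)⁻¹ := by
              group
            rw [hconj]
            exact hrefl_r.conj v⁻¹
          · have hveq : v * (b * t * b⁻¹) = ((v * b) * t * (v * b)⁻¹) * v := by group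
            rw [hveq]
            exact hrv
        · rw [hb1] at hsgn
          obtain ⟨hrefl_t, hmem_t⟩ := sgn_neg_parabolic cs hb hb1
          have hbt : cs.IsReflection (b * t * b⁻¹) := hrefl_t.conj b
          have hmem_bt : b * t * b⁻¹ ∈ parabolic cs Y :=
            mul_mem (mul_mem hb hmem_t) (inv_mem hb)
          exact ⟨hbt, hY _ hbt hmem_bt⟩
      rw [(SGN_eq_neg_one_iff cs v _).mpr habsurd] at h1
      exact absurd h1 (by decide)
    have hmemv : b * t * b⁻¹ ∈ invR cs v := (SGN_eq_neg_one_iff cs v _).mp hgoal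
    exact ⟨b * t * b⁻¹, hmemv, by group⟩
  have hinj : Function.Injective (fun t : W => b⁻¹ * t * b) := by
    intro t1 t2 h12
    dsimp at h12
    calc t1 = b * (b⁻¹ * t1 * b) * b⁻¹ := by group
      _ = b * (b⁻¹ * t2 * b) * b⁻¹ := by rw [h12]
      _ = t2 := by group
  have hSfin : S.Finite := (invR_finite cs v).image _
  calc cs.length (a * v * b) = (invR cs (a * v * b)).ncard := (ncard_invR cs _).symm
    _ ≤ S.ncard := Set.ncard_le_ncard hsub hSfin
    _ = (invR cs v).ncard := Set.ncard_image_of_injective _ hinj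
    _ = cs.length v := ncard_invR cs v

lemma dem_spec (x y : W) :
    ∃ l : List B, cs.IsReduced l ∧ cs.wordProd l = y ∧ dem cs x y = demWord cs x l := by
  have h := Classical.choose_spec (cs.exists_reduced_word y)
  refine ⟨Classical.choose (cs.exists_reduced_word y), ?_, h.2.symm, rfl⟩
  show cs.length (cs.wordProd _) = _
  rw [← h.2]
  exact (congrArg cs.length h.2).trans h.1

lemma invR_subset_of_additive {x z : W}
    (h : cs.length (x * z) = cs.length x + cs.length z) {t : W}
    (ht : cs.IsRightInversion z t) : cs.IsRightInversion (x * z) t := by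
  obtain ⟨ωx, hxred, hxprod⟩ := cs.exists_reduced_word' x
  obtain ⟨ωz, hzred, hzprod⟩ := cs.exists_reduced_word' z
  have hprod : cs.wordProd (ωx ++ ωz) = x * z := by
    rw [cs.wordProd_append, ← hxprod, ← hzprod]
  have hred : cs.IsReduced (ωx ++ ωz) := by
    show cs.length (cs.wordProd (ωx ++ ωz)) = (ωx ++ ωz).length
    have e1 : cs.length x = ωx.length := by rw [hxprod]; exact hxred
    have e2 : cs.length z = ωz.length := by rw [hzprod]; exact hzred
    rw [hprod, List.length_append, h]
    omega
  have hmem : t ∈ cs.rightInvSeq ωz := by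
    rw [mem_rightInvSeq_iff cs hzred, ← hzprod]
    exact ht
  have hmem2 : t ∈ cs.rightInvSeq (ωx ++ ωz) := by
    rw [ris_append]
    exact List.mem_append_right _ hmem
  have := cs.isRightInversion_of_mem_rightInvSeq hred hmem2
  rwa [hprod] at this

lemma invL_of_additive {x z t : W}
    (h : cs.length (x * z) = cs.length x + cs.length z)
    (ht : cs.IsReflection t) (hlt : cs.length (t * x) < cs.length x) :
    cs.length (t * (x * z)) < cs.length (x * z) := by
  have hx_inv : cs.IsRightInversion x⁻¹ t := by
    refine ⟨ht, ?_⟩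
    have e1 : x⁻¹ * t = (t * x)⁻¹ := by rw [mul_inv_rev, ht.inv]
    rw [e1, cs.length_inv, cs.length_inv]
    exact hlt
  have hadd' : cs.length (z⁻¹ * x⁻¹) = cs.length z⁻¹ + cs.length x⁻¹ := by
    rw [← mul_inv_rev, cs.length_inv, cs.length_inv, cs.length_inv, h]
    omega
  have h2 := invR_subset_of_additive cs hadd' hx_inv
  have e2 : z⁻¹ * x⁻¹ * t = (t * (x * z))⁻¹ := by
    rw [mul_inv_rev, mul_inv_rev, ht.inv]
  have e3 : cs.length (z⁻¹ * x⁻¹) = cs.length (x * z) := by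
    rw [← mul_inv_rev, cs.length_inv]
  have := h2.2
  rw [e2, cs.length_inv, e3] at this
  exact this

/-- The up-step: the Bruhat maximum of the larger coset is the Demazure product of the
previous maximum with the longest element. -/
lemma up_step {I0 J : Set B} {m wJ : W} {q : Set W}
    (hq : IsDCoset cs I0 J q) (hmq : m ∈ q)
    (hminv : ∀ t, cs.IsReflection t → t ∈ parabolic cs I0 →
      cs.length (t * m) < cs.length m)
    (hwJ : IsMaxOf cs (parabolic cs J : Set W) wJ)
    (M : W) (hM : IsMaxOf cs q M) :
    M = dem cs m wJ := by
  obtain ⟨l, hlred, hlprod, hldem⟩ := dem_spec cs m wJ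
  have hlet : ∀ i ∈ l, cs.simple i ∈ parabolic cs J := by
    apply simple_mem_parabolic_of_mem_reduced cs J l hlred
    rw [hlprod]
    exact hwJ.1
  set u := demWord cs m l with hu
  have hc : m⁻¹ * u ∈ parabolic cs J := demWord_mul_mem cs (parabolic cs J) hlet m
  have hmu : u = m * (m⁻¹ * u) := by group
  obtain ⟨w₀, hw₀⟩ := hq
  have hq_eq : q = doset cs I0 J m := by
    rw [hw₀]
    exact (doset_eq_of_mem cs (by rw [← hw₀]; exact hmq)).symm
  have huq : u ∈ q := by
    rw [hq_eq]
    have := doset_mul_right_mem cs (mem_doset_self cs I0 J m) hc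
    rwa [← hmu] at this
  obtain ⟨y, hy, hylen⟩ := demWord_top cs m l hlred
  rw [hlprod] at hy hylen
  rw [← hu] at hy hylen
  have hYinv : ∀ t, cs.IsReflection t → t ∈ parabolic cs J →
      cs.length (u * t) < cs.length u := by
    intro t ht htJ
    have h1 : cs.length (wJ * t) < cs.length wJ := by
      have hmem : wJ * t ∈ (parabolic cs J : Set W) := mul_mem hwJ.1 htJ
      have h2 := bruhatLE_length_le cs (hwJ.2 _ hmem)
      have h3 := ht.length_mul_left_ne wJ
      omega
    have hadd : cs.length (y * wJ) = cs.length y + cs.length wJ := by rw [← hy]; exact hylen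
    have := invR_subset_of_additive cs hadd ⟨ht, h1⟩
    rw [← hy] at this
    exact this.2
  have hXinv : ∀ t, cs.IsReflection t → t ∈ parabolic cs I0 →
      cs.length (t * u) < cs.length u := by
    intro t ht htI
    have hadd : cs.length (m * (m⁻¹ * u)) = cs.length m + cs.length (m⁻¹ * u) := by
      rw [← hmu, hu]
      exact demWord_length_additive cs l m
    have := invL_of_additive cs hadd ht (hminv t ht htI)
    rwa [← hmu] at this
  have hq_eq_u : q = doset cs I0 J u := by
    rw [hq_eq]
    exact (doset_eq_of_mem cs (by rw [← hq_eq]; exact huq)).symm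
  have hMdoset : M ∈ doset cs I0 J u := by rw [← hq_eq_u]; exact hM.1
  obtain ⟨a, haI, b, hbJ, hMab⟩ := hMdoset
  have hlen_le : cs.length M ≤ cs.length u := by
    rw [hMab]
    exact length_amb_le cs haI hbJ hXinv hYinv
  have hble : BruhatLE cs u M := hM.2 u huq
  have heq := bruhatLE_eq_of_length_ge cs hble hlen_le
  rw [hldem]
  exact heq.symm

end

/-- The forward path subordinate to a singlestep expression terminates at the
coset expressed by it: its final maximal element is `w_{I_0} * ⋯ * w_{I_d}`. -/
theorem forward_path_terminus (cs : CoxeterSystem M W) (I : ℕ → Set B) (d : ℕ)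
    (hss : IsSinglestep I d) (hfin : ∀ i ≤ d, Finitary cs (I i))
    (wI : ℕ → W) (hwI : ∀ i ≤ d, IsMaxOf cs (parabolic cs (I i) : Set W) (wI i))
    (p : ℕ → Set W) (hp : IsSubPath cs I d p)
    (Mp : ℕ → W) (hMp : ∀ i ≤ d, IsMaxOf cs (p i) (Mp i))
    (hfwd : ∀ k < d, I (k + 1) ⊆ I k → Mp (k + 1) = Mp k) :
    Mp d = exprMax cs wI d := by
  suffices h : ∀ k, k ≤ d → Mp k = exprMax cs wI k from h d le_rfl
  intro k
  induction k with
  | zero =>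
    intro _
    have hset : p 0 = (parabolic cs (I 0) : Set W) := by
      rw [hp.1]
      ext x
      constructor
      · rintro ⟨a, ha, b, hb, rfl⟩
        have : a * 1 * b = a * b := by group
        rw [this]
        exact mul_mem ha hb
      · intro hx
        exact ⟨x, hx, 1, one_mem _, by simp⟩
    have h0 : IsMaxOf cs (parabolic cs (I 0) : Set W) (Mp 0) := by
      rw [← hset]
      exact hMp 0 (by omega)
    have hmeq := isMaxOf_unique cs h0 (hwI 0 (by omega))
    have hE : exprMax cs wI 0 = wI 0 := by simp [exprMax]
    rw [hE]
    exact hmeq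
  | succ k ih =>
    intro hk1
    have hk : k < d := by omega
    have ihk := ih (by omega)
    have hE : exprMax cs wI (k + 1) = dem cs (exprMax cs wI k) (wI (k + 1)) := by
      unfold exprMax
      rw [List.range_succ, List.map_append, List.foldl_append]
      simp
    rcases hss k hk with ⟨s, _, hins⟩ | ⟨s, _, hdel⟩
    · -- up-step
      have hsub : I k ⊆ I (k + 1) := by rw [hins]; exact Set.subset_insert _ _
      have hpk_sub : p k ⊆ p (k + 1) := ((hp.2.2 k hk).1) hsub
      have hq : IsDCoset cs (I 0) (I (k + 1)) (p (k + 1)) := hp.2.1 (k + 1) hk1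
      have hmq : Mp k ∈ p (k + 1) := hpk_sub ((hMp k (by omega)).1)
      have hminv : ∀ t, cs.IsReflection t → t ∈ parabolic cs (I 0) →
          cs.length (t * Mp k) < cs.length (Mp k) := by
        intro t ht htI
        obtain ⟨w₀, hw₀⟩ := hp.2.1 k (by omega)
        have h1 : Mp k ∈ p k := (hMp k (by omega)).1
        have h2 : t * Mp k ∈ p k := by
          rw [hw₀] at h1 ⊢
          exact doset_mul_left_mem cs h1 htI
        have h3 := bruhatLE_length_le cs ((hMp k (by omega)).2 _ h2)
        have h4 := ht.length_mul_right_ne (Mp k)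
        omega
      have hstep := up_step cs hq hmq hminv (hwI (k + 1) hk1) (Mp (k + 1)) (hMp (k + 1) hk1)
      rw [hstep, ihk, hE]
    · -- down-step
      have hsub : I (k + 1) ⊆ I k := by rw [hdel]; exact Set.diff_subset
      have hfk := hfwd k hk hsub
      obtain ⟨l, hlred, hlprod, hldem⟩ := dem_spec cs (Mp k) (wI (k + 1))
      have hlet : ∀ i ∈ l, cs.simple i ∈ parabolic cs (I (k + 1)) := by
        apply simple_mem_parabolic_of_mem_reduced cs _ l hlred
        rw [hlprod]
        exact (hwI (k + 1) hk1).1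
      have hfixes : ∀ i ∈ l, cs.length (Mp k * cs.simple i) < cs.length (Mp k) := by
        intro i hi
        have hsi : cs.simple i ∈ parabolic cs (I k) := parabolic_mono cs hsub (hlet i hi)
        obtain ⟨w₀, hw₀⟩ := hp.2.1 k (by omega)
        have h1 : Mp k ∈ p k := (hMp k (by omega)).1
        have h2 : Mp k * cs.simple i ∈ p k := by
          rw [hw₀] at h1 ⊢
          exact doset_mul_right_mem cs h1 hsi
        have h3 := bruhatLE_length_le cs ((hMp k (by omega)).2 _ h2)
        have h4 := (cs.isReflection_simple i).length_mul_left_ne (Mp k)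
        omega
      have hdem_eq : dem cs (Mp k) (wI (k + 1)) = Mp k := by
        rw [hldem]
        exact demWord_fix cs hfixes
      rw [hE, ← ihk, hdem_eq, hfk]

end CoxeterPaper
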